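/- Let (T, β) be a regular self-affine structure on ℝ^d satisfying the assumptions of the main fractal-dimension theorem with parameters {ρ_n}, {C_n}, {L_n^{(j)}} and index 1 ≤ ℓ < d. Let κ ∈ T_n, and let U be an open subset of ℝ^d intersecting the fractal F(T,β) with U ∩ F(T,β) ⊆ β(κ), n = n(U), and diam(U) ≥ ρ_{n+1} L_n^{(1)}. Then there is a family S of elementary squares of β(κ) (closed cubes contained in β(κ) of side length L_n^{(1)}) such that (1) ⋃_{S∈S} S ⊇ U ∩ F(T,β), and (2) (L_n^{(1)})^t · #S ≤ 2^{d−ℓ} ρ_{n+1}^{−t} diam(U)^t for all t ≥ d − ℓ. -/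

import Mathlib

open Filter

/-- The rectangle `β(τ)` of the self-affine structure: a box with lower corner
`corner τ` and side lengths `L (height τ) j` in coordinate `j` (sides indexed `1,…,d`). -/
def βdef (d : ℕ) (corner : List ℕ → Fin d → ℝ) (L : ℕ → ℕ → ℝ) (τ : List ℕ) :
    Set (EuclideanSpace ℝ (Fin d)) :=
  {x | ∀ i : Fin d, corner τ i ≤ x i ∧ x i ≤ corner τ i + L τ.length ((i : ℕ) + 1)}

/-- The fractal `F(T,β) = ⋃_{rays σ} ⋂_n β(σ|_n)`. -/
def fractal (d : ℕ) (T : Set (List ℕ)) (β : List ℕ → Set (EuclideanSpace ℝ (Fin d))) :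
    Set (EuclideanSpace ℝ (Fin d)) :=
  ⋃ σ ∈ {σ : ℕ → ℕ | ∀ n, (List.ofFn fun i : Fin n => σ i) ∈ T},
    ⋂ n, β (List.ofFn fun i : Fin n => σ i)

/-- Each coordinate difference is bounded by the Euclidean distance. -/
lemma coord_dist_le {d : ℕ} (x y : EuclideanSpace ℝ (Fin d)) (i : Fin d) :
    |x i - y i| ≤ dist x y := by
  rw [EuclideanSpace.dist_eq]
  have h1 : |x i - y i| = Real.sqrt (dist (x i) (y i) ^ 2) := by
    rw [Real.sqrt_sq_eq_abs, Real.dist_eq, abs_abs]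
  rw [h1]
  apply Real.sqrt_le_sqrt
  exact Finset.single_le_sum (f := fun j => dist (x j) (y j) ^ 2)
    (fun j _ => sq_nonneg _) (Finset.mem_univ i)

/-- existence of an efficient cover of `U ∩ F(T,β)` by elementary squares
(closed cubes of side `L n 1` contained in `β(κ)`). -/
theorem stmt8 (d ℓ : ℕ) (hl1 : 1 ≤ ℓ) (hld : ℓ < d)
    (T : Set (List ℕ)) (corner : List ℕ → Fin d → ℝ) (L : ℕ → ℕ → ℝ) (ρ : ℕ → ℝ)
    (hLpos : ∀ n j, 1 ≤ j → j ≤ d → 0 < L n j)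
    (hLdec : ∀ n j, 1 ≤ j → j ≤ d → L (n + 1) j ≤ L n j)
    (hLeq : ∀ n j, 1 ≤ j → j ≤ ℓ → L n j = L n 1)
    (hLlt : ∀ n, L n 1 < L n (ℓ + 1))
    (hLord : ∀ n j, ℓ + 1 ≤ j → j < d → L n j ≤ L n (j + 1))
    (hρ : ∀ n, 0 < ρ n ∧ ρ n ≤ 1)
    (n : ℕ) (κ : List ℕ) (hκ : κ ∈ T) (hκn : κ.length = n)
    (U : Set (EuclideanSpace ℝ (Fin d))) (hU : IsOpen U)
    (hUF : (U ∩ fractal d T (βdef d corner L)).Nonempty)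
    (hUβ : U ∩ fractal d T (βdef d corner L) ⊆ βdef d corner L κ)
    (hdiam : ρ (n + 1) * L n 1 ≤ Metric.diam U) :
    ∃ 𝒮 : Finset (Fin d → ℝ),
      (∀ c ∈ 𝒮, {x : EuclideanSpace ℝ (Fin d) | ∀ i, c i ≤ x i ∧ x i ≤ c i + L n 1}
          ⊆ βdef d corner L κ) ∧
      (U ∩ fractal d T (βdef d corner L) ⊆
        ⋃ c ∈ 𝒮, {x : EuclideanSpace ℝ (Fin d) | ∀ i, c i ≤ x i ∧ x i ≤ c i + L n 1}) ∧
      ∀ t : ℝ, (d : ℝ) - ℓ ≤ t →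
        L n 1 ^ t * (𝒮.card : ℝ) ≤
          2 ^ (d - ℓ) * ρ (n + 1) ^ (-t) * Metric.diam U ^ t := by
  classical
  set F := fractal d T (βdef d corner L) with hF
  set D := Metric.diam U with hDdef
  set Lv := L n 1 with hLvdef
  set r := ρ (n + 1) with hrdef
  have hd1 : 1 ≤ d := le_of_lt (lt_of_le_of_lt hl1 hld)
  have hLvpos : 0 < Lv := hLpos n 1 le_rfl hd1
  have hrpos : 0 < r := (hρ (n + 1)).1
  have hr1 : r ≤ 1 := (hρ (n + 1)).2
  have hDpos : 0 < D := lt_of_lt_of_le (mul_pos hrpos hLvpos) hdiam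
  have hbdd : Bornology.IsBounded U := by
    by_contra h
    rw [hDdef, Metric.diam_eq_zero_of_unbounded h] at hDpos
    exact lt_irrefl 0 hDpos
  -- side lengths are all at least Lv
  have hmono : ∀ j, ℓ + 1 ≤ j → j ≤ d → L n (ℓ + 1) ≤ L n j := by
    intro j hj1 hj2
    induction j with
    | zero => omega
    | succ m ih =>
      rcases Nat.lt_or_ge (ℓ + 1) (m + 1) with h | h
      · have hm : ℓ + 1 ≤ m := by omega
        exact le_trans (ih hm (by omega)) (hLord n m hm (by omega))
      · have he : ℓ + 1 = m + 1 := le_antisymm hj1 h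
        rw [← he]
  have hside : ∀ i : Fin d, Lv ≤ L n ((i : ℕ) + 1) := by
    intro i
    rcases Nat.lt_or_ge (i : ℕ) ℓ with h | h
    · rw [hLeq n ((i : ℕ) + 1) (by omega) (by omega)]
    · exact le_trans (hLlt n).le (hmono ((i : ℕ) + 1) (by omega) (by omega))
  -- box membership with height rewritten
  have hbox : ∀ x ∈ U ∩ F, ∀ i : Fin d,
      corner κ i ≤ x i ∧ x i ≤ corner κ i + L n ((i : ℕ) + 1) := by
    intro x hx i
    have h := hUβ hx i
    rwa [hκn] at h
  -- the infimum of each coordinate over U ∩ F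
  set a : Fin d → ℝ :=
    fun i => sInf ((fun x : EuclideanSpace ℝ (Fin d) => x i) '' (U ∩ F)) with hadef
  have hne : ∀ i : Fin d,
      ((fun x : EuclideanSpace ℝ (Fin d) => x i) '' (U ∩ F)).Nonempty :=
    fun i => hUF.image _
  have hbb : ∀ i : Fin d,
      BddBelow ((fun x : EuclideanSpace ℝ (Fin d) => x i) '' (U ∩ F)) := by
    intro i
    refine ⟨corner κ i, ?_⟩
    rintro y ⟨z, hz, rfl⟩
    exact (hbox z hz i).1
  have ha_corner : ∀ i : Fin d, corner κ i ≤ a i := by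
    intro i
    apply le_csInf (hne i)
    rintro y ⟨z, hz, rfl⟩
    exact (hbox z hz i).1
  have ha_le : ∀ x ∈ U ∩ F, ∀ i : Fin d, a i ≤ x i :=
    fun x hx i => csInf_le (hbb i) ⟨x, hx, rfl⟩
  have ha_ub : ∀ x ∈ U ∩ F, ∀ i : Fin d, x i ≤ a i + D := by
    intro x hx i
    have h : x i - D ≤ a i := by
      apply le_csInf (hne i)
      rintro y ⟨z, hz, rfl⟩
      have hdist : dist x z ≤ D := Metric.dist_le_diam_of_mem hbdd hx.1 hz.1
      have h2 : x i - z i ≤ D :=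
        le_trans (le_abs_self _) (le_trans (coord_dist_le x z i) hdist)
      show x i - D ≤ z i
      linarith
    linarith
  set M := ⌈D / Lv⌉₊ with hMdef
  have hM1 : 1 ≤ M := Nat.one_le_iff_ne_zero.mpr
    (Nat.ceil_pos.mpr (div_pos hDpos hLvpos)).ne'
  have hDM : D ≤ (M : ℝ) * Lv := by
    have h1 : D / Lv ≤ (M : ℝ) := Nat.le_ceil _
    calc D = D / Lv * Lv := (div_mul_cancel₀ _ hLvpos.ne').symm
      _ ≤ (M : ℝ) * Lv := mul_le_mul_of_nonneg_right h1 hLvpos.le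
  set g : (Fin d → ℕ) → (Fin d → ℝ) :=
    fun k i => min (a i + k i * Lv) (corner κ i + L n ((i : ℕ) + 1) - Lv) with hgdef
  set A : Finset (Fin d → ℕ) :=
    Fintype.piFinset fun i : Fin d =>
      if (i : ℕ) < ℓ then ({0} : Finset ℕ) else Finset.range M with hAdef
  refine ⟨A.image g, ?_, ?_, ?_⟩
  · -- each cube is contained in β(κ)
    intro c hc x hx
    obtain ⟨k, _, rfl⟩ := Finset.mem_image.mp hc
    intro i
    have h1 := (hx i).1
    have h2 := (hx i).2
    have hs := hside i
    have hac := ha_corner i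
    rw [hκn]
    constructor
    · have : corner κ i ≤ g k i := by
        apply le_min
        · have : (0 : ℝ) ≤ (k i : ℝ) * Lv := by positivity
          linarith
        · linarith
      linarith
    · have : g k i ≤ corner κ i + L n ((i : ℕ) + 1) - Lv := min_le_right _ _
      linarith
  · -- covering property
    intro x hx
    set k : Fin d → ℕ := fun i =>
      if (i : ℕ) < ℓ then 0 else min ⌊(x i - a i) / Lv⌋₊ (M - 1) with hkdef
    have hkA : k ∈ A := by
      rw [hAdef, Fintype.mem_piFinset]
      intro i
      by_cases hi : (i : ℕ) < ℓ
      · simp [hkdef, hi]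
      · simp only [hkdef, hi, if_false, hAdef, Finset.mem_range]
        have := min_le_right ⌊(x i - a i) / Lv⌋₊ (M - 1)
        omega
    refine Set.mem_iUnion₂.mpr ⟨g k, Finset.mem_image_of_mem g hkA, ?_⟩
    intro i
    have hax := ha_le x hx i
    have haub := ha_ub x hx i
    have hbx := hbox x hx i
    have hz0 : 0 ≤ (x i - a i) / Lv := div_nonneg (by linarith) hLvpos.le
    constructor
    · -- lower bound
      refine le_trans (min_le_left _ _) ?_
      have hkr : (k i : ℝ) * Lv ≤ x i - a i := by
        by_cases hi : (i : ℕ) < ℓ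
        · simp only [hkdef, hi, if_true, Nat.cast_zero, zero_mul]
          linarith
        · have hkle : k i ≤ ⌊(x i - a i) / Lv⌋₊ := by
            simp only [hkdef, hi, if_false]
            exact min_le_left _ _
          have h1 : (k i : ℝ) ≤ (x i - a i) / Lv :=
            le_trans (Nat.cast_le.mpr hkle) (Nat.floor_le hz0)
          calc (k i : ℝ) * Lv ≤ (x i - a i) / Lv * Lv :=
                mul_le_mul_of_nonneg_right h1 hLvpos.le
            _ = x i - a i := div_mul_cancel₀ _ hLvpos.ne'
      linarith
    · -- upper bound
      have h1 : x i ≤ a i + ((k i : ℝ) + 1) * Lv := by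
        by_cases hi : (i : ℕ) < ℓ
        · have hEq : L n ((i : ℕ) + 1) = Lv := hLeq n ((i : ℕ) + 1) (by omega) (by omega)
          have hac := ha_corner i
          simp only [hkdef, hi, if_true, Nat.cast_zero, zero_add, one_mul]
          rw [hEq] at hbx
          linarith [hbx.2]
        · simp only [hkdef, hi, if_false]
          rcases min_cases ⌊(x i - a i) / Lv⌋₊ (M - 1) with ⟨he, _⟩ | ⟨he, _⟩
          · rw [he]
            have h2 : (x i - a i) / Lv < (⌊(x i - a i) / Lv⌋₊ : ℝ) + 1 :=
              Nat.lt_floor_add_one _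
            have h3 : x i - a i < ((⌊(x i - a i) / Lv⌋₊ : ℝ) + 1) * Lv := by
              calc x i - a i = (x i - a i) / Lv * Lv :=
                    (div_mul_cancel₀ _ hLvpos.ne').symm
                _ < ((⌊(x i - a i) / Lv⌋₊ : ℝ) + 1) * Lv :=
                    mul_lt_mul_of_pos_right h2 hLvpos
            linarith
          · rw [he]
            have hcast : ((M - 1 : ℕ) : ℝ) + 1 = (M : ℝ) := by
              rw [Nat.cast_sub hM1]
              push_cast
              ring
            rw [hcast]
            linarith
      have hxi2 : x i ≤ corner κ i + L n ((i : ℕ) + 1) := hbx.2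
      have hmin : x i - Lv ≤ g k i :=
        le_min (by linarith) (by linarith)
      show x i ≤ g k i + Lv
      linarith
  · -- counting estimate
    intro t ht
    have hcardA : A.card = M ^ (d - ℓ) := by
      rw [hAdef, Fintype.card_piFinset]
      have h1 : ∀ i : Fin d,
          (if (i : ℕ) < ℓ then ({0} : Finset ℕ) else Finset.range M).card =
            if (i : ℕ) < ℓ then 1 else M := by
        intro i; split <;> simp
      rw [Finset.prod_congr rfl (fun i _ => h1 i), Finset.prod_ite,
        Finset.prod_const_one, Finset.prod_const, one_mul]
      congr 1
      have hfil : (Finset.univ.filter fun i : Fin d => ¬ (i : ℕ) < ℓ) =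
          Finset.Ici (⟨ℓ, hld⟩ : Fin d) := by
        ext i
        simp [Fin.le_def, not_lt]
      rw [hfil, Fin.card_Ici]
    have hcard : (((A.image g).card : ℕ) : ℝ) ≤ ((M : ℝ)) ^ (d - ℓ) := by
      have h1 : (A.image g).card ≤ M ^ (d - ℓ) := hcardA ▸ Finset.card_image_le
      calc (((A.image g).card : ℕ) : ℝ) ≤ ((M ^ (d - ℓ) : ℕ) : ℝ) := Nat.cast_le.mpr h1
        _ = ((M : ℝ)) ^ (d - ℓ) := by push_cast; ring
    have hq1 : 1 ≤ D / (r * Lv) := (one_le_div (by positivity)).mpr hdiam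
    have hMle : (M : ℝ) ≤ 2 * (D / (r * Lv)) := by
      have h1 : (M : ℝ) < D / Lv + 1 := Nat.ceil_lt_add_one (by positivity)
      have h2 : D / Lv ≤ D / (r * Lv) := by
        apply div_le_div_of_nonneg_left hDpos.le (by positivity)
        nlinarith
      linarith
    have hqpos : 0 < D / (r * Lv) := lt_of_lt_of_le one_pos hq1
    have key : ((M : ℝ)) ^ (d - ℓ) ≤ 2 ^ (d - ℓ) * (D / (r * Lv)) ^ t := by
      calc ((M : ℝ)) ^ (d - ℓ) ≤ (2 * (D / (r * Lv))) ^ (d - ℓ) :=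
            pow_le_pow_left₀ (Nat.cast_nonneg M) hMle _
        _ = 2 ^ (d - ℓ) * (D / (r * Lv)) ^ (d - ℓ) := mul_pow _ _ _
        _ ≤ 2 ^ (d - ℓ) * (D / (r * Lv)) ^ t := by
            apply mul_le_mul_of_nonneg_left _ (by positivity)
            rw [← Real.rpow_natCast (D / (r * Lv)) (d - ℓ)]
            apply Real.rpow_le_rpow_of_exponent_le hq1
            rw [Nat.cast_sub hld.le]
            exact ht
    calc Lv ^ t * (((A.image g).card : ℕ) : ℝ)
        ≤ Lv ^ t * ((M : ℝ)) ^ (d - ℓ) :=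
          mul_le_mul_of_nonneg_left hcard (Real.rpow_nonneg hLvpos.le t)
      _ ≤ Lv ^ t * (2 ^ (d - ℓ) * (D / (r * Lv)) ^ t) :=
          mul_le_mul_of_nonneg_left key (Real.rpow_nonneg hLvpos.le t)
      _ = 2 ^ (d - ℓ) * (Lv ^ t * (D / (r * Lv)) ^ t) := by ring
      _ = 2 ^ (d - ℓ) * (Lv * (D / (r * Lv))) ^ t := by
          rw [← Real.mul_rpow hLvpos.le hqpos.le]
      _ = 2 ^ (d - ℓ) * (D / r) ^ t := by
          congr 2
          field_simp
      _ = 2 ^ (d - ℓ) * r ^ (-t) * D ^ t := by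
          rw [Real.div_rpow hDpos.le hrpos.le, Real.rpow_neg hrpos.le]
          ring
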